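/- For any even positive integer n and any natural number λ, the number of orbits of the rotation group Z/nZ acting on the set of proper λ-colorings of the cycle Γ_n equals (1/n) ∑_{d | n} φ(n/d) (λ−1)^d. -/

import Mathlib

private abbrev PathS (l k : ℕ) := {f : Fin (k+1) → Fin l // ∀ i : Fin k, f i.castSucc ≠ f i.succ}

private abbrev CycF (l d : ℕ) [NeZero d] := {f : Fin d → Fin l // ∀ x, f x ≠ f (x+1)}

private def pathSuccEquiv (l k : ℕ) :
    PathS l (k+1) ≃ Σ f : PathS l k, {c : Fin l // f.1 (Fin.last k) ≠ c} where
  toFun F := ⟨⟨fun i => F.1 i.castSucc, fun i => by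
      simpa using F.2 i.castSucc⟩,
    ⟨F.1 (Fin.last (k+1)), by simpa [Fin.succ_last] using F.2 (Fin.last k)⟩⟩
  invFun P := ⟨Fin.snoc P.1.1 P.2.1, by
    intro i
    refine Fin.lastCases ?_ (fun j => ?_) i
    · simpa [Fin.succ_last, Fin.snoc_castSucc, Fin.snoc_last] using P.2.2
    · rw [Fin.succ_castSucc, Fin.snoc_castSucc, Fin.snoc_castSucc]; exact P.1.2 j⟩
  left_inv F := by
    apply Subtype.ext; funext i
    refine Fin.lastCases ?_ (fun j => ?_) i <;> simp
  right_inv P := by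
    refine Sigma.ext ?_ ?_
    · apply Subtype.ext; funext i; simp
    · apply Subtype.heq_iff_coe_eq ?_ |>.mpr ?_ 
      · intro c; simp
      · simp

private lemma card_pathS (l k : ℕ) : Nat.card (PathS l k) = l * (l-1)^k := by
  induction k with
  | zero =>
    have e : PathS l 0 ≃ Fin l :=
      { toFun := fun f => f.1 0
        invFun := fun c => ⟨fun _ => c, fun i => i.elim0⟩
        left_inv := fun f => by
          apply Subtype.ext; funext i
          exact congrArg f.1 (Fin.eq_zero i).symm
        right_inv := fun c => rfl }
    rw [Nat.card_congr e, Nat.card_eq_fintype_card, Fintype.card_fin, pow_zero, Nat.mul_one]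
  | succ k ih =>
    rw [Nat.card_congr (pathSuccEquiv l k), Nat.card_eq_fintype_card, Fintype.card_sigma]
    have : ∀ f : PathS l k, Fintype.card {c : Fin l // f.1 (Fin.last k) ≠ c} = l - 1 := by
      intro f
      rw [Fintype.card_subtype_compl]
      simp
    simp only [this, Finset.sum_const, Finset.card_univ, smul_eq_mul]
    rw [← Nat.card_eq_fintype_card, ih, pow_succ, Nat.mul_assoc]

private lemma card_cycF_one (l : ℕ) : Nat.card (CycF l 1) = 0 := by
  have : IsEmpty (CycF l 1) := by
    constructor; rintro ⟨f, hf⟩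
    exact hf 0 (congrArg f (Fin.eq_zero _).symm)
  exact Nat.card_of_isEmpty

private def cycNeEquiv (l k : ℕ) :
    {F : PathS l (k+1) // ¬ F.1 (Fin.last (k+1)) = F.1 0} ≃ CycF l (k+2) where
  toFun F := ⟨F.1.1, by
    intro x
    refine Fin.lastCases ?_ (fun j => ?_) x
    · simpa [Fin.last_add_one] using F.2
    · simpa [Fin.coeSucc_eq_succ] using F.1.2 j⟩
  invFun f := ⟨⟨f.1, fun i => by simpa [Fin.coeSucc_eq_succ] using f.2 i.castSucc⟩,
    by simpa [Fin.last_add_one] using f.2 (Fin.last (k+1))⟩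
  left_inv F := rfl
  right_inv f := rfl

private def cycEqEquiv (l k : ℕ) :
    {F : PathS l (k+1) // F.1 (Fin.last (k+1)) = F.1 0} ≃ CycF l (k+1) where
  toFun F := ⟨fun i => F.1.1 i.castSucc, by
    intro x
    refine Fin.lastCases ?_ (fun j => ?_) x
    · simp only [Fin.last_add_one, Fin.castSucc_zero]
      rw [← F.2]
      simpa [Fin.succ_last] using F.1.2 (Fin.last k)
    · simpa [Fin.coeSucc_eq_succ] using F.1.2 j.castSucc⟩
  invFun g := by
    refine ⟨⟨Fin.snoc g.1 (g.1 0), ?_⟩, ?_⟩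
    · intro i
      refine Fin.lastCases ?_ (fun j => ?_) i
      · rw [Fin.succ_last]
        simp only [Fin.snoc_castSucc, Fin.snoc_last]
        simpa [Fin.last_add_one] using g.2 (Fin.last k)
      · rw [Fin.succ_castSucc]
        simp only [Fin.snoc_castSucc]
        simpa [Fin.coeSucc_eq_succ] using g.2 j.castSucc
    · show (Fin.snoc g.1 (g.1 0) : Fin (k+2) → Fin l) (Fin.last (k+1))
          = (Fin.snoc g.1 (g.1 0) : Fin (k+2) → Fin l) (0 : Fin (k+2))
      have h0 : (0 : Fin (k+2)) = Fin.castSucc (0 : Fin (k+1)) := (Fin.castSucc_zero).symm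
      rw [h0, Fin.snoc_last, Fin.snoc_castSucc]
  left_inv F := by
    apply Subtype.ext; apply Subtype.ext; funext i
    refine Fin.lastCases ?_ (fun j => ?_) i
    · simp [F.2]
    · simp
  right_inv g := by
    apply Subtype.ext; funext i; simp

private lemma card_cyc_rec (l k : ℕ) :
    Nat.card (CycF l (k+2)) + Nat.card (CycF l (k+1)) = Nat.card (PathS l (k+1)) := by
  classical
  rw [← Nat.card_congr (cycNeEquiv l k), ← Nat.card_congr (cycEqEquiv l k)]
  rw [Nat.card_eq_fintype_card, Nat.card_eq_fintype_card, Nat.card_eq_fintype_card]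
  have h1 := Fintype.card_subtype_compl (α := PathS l (k+1))
    (fun F => F.1 (Fin.last (k+1)) = F.1 0)
  have h2 := Fintype.card_subtype_le (fun F : PathS l (k+1) => F.1 (Fin.last (k+1)) = F.1 0)
  omega

private lemma card_cycF_int (l k : ℕ) :
    (Nat.card (CycF l (k+1)) : ℤ) = ((l:ℤ)-1)^(k+1) + (-1)^(k+1) * ((l:ℤ)-1) := by
  rcases Nat.eq_zero_or_pos l with hl | hl
  · subst hl
    have : IsEmpty (CycF 0 (k+1)) := by
      constructor; rintro ⟨f, -⟩; exact (f 0).elim0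
    rw [Nat.card_of_isEmpty]
    push_cast
    ring
  · induction k with
    | zero => rw [card_cycF_one]; push_cast; ring
    | succ k ih =>
      have hrec := card_cyc_rec l k
      rw [card_pathS] at hrec
      have hcast : ((l * (l-1)^(k+1) : ℕ) : ℤ) = (l:ℤ) * ((l:ℤ)-1)^(k+1) := by
        push_cast [hl]
        ring
      have h2 : (Nat.card (CycF l (k+2)) : ℤ) + (Nat.card (CycF l (k+1)) : ℤ)
          = (l:ℤ) * ((l:ℤ)-1)^(k+1) := by
        rw [← hcast]; exact_mod_cast congrArg (Nat.cast : ℕ → ℤ) hrec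
      rw [ih] at h2
      have : (Nat.card (CycF l (k+2)) : ℤ)
          = (l:ℤ) * ((l:ℤ)-1)^(k+1) - (((l:ℤ)-1)^(k+1) + (-1)^(k+1) * ((l:ℤ)-1)) := by
        linarith
      rw [this]; ring

private lemma card_cycZ (l d : ℕ) (hd : 0 < d) :
    (Nat.card {f : ZMod d → Fin l // ∀ x, f x ≠ f (x+1)} : ℤ)
      = ((l:ℤ)-1)^d + (-1)^d * ((l:ℤ)-1) := by
  cases d with
  | zero => omega
  | succ k => exact card_cycF_int l k

private abbrev CycZ (n l : ℕ) := {f : ZMod n → Fin l // ∀ x : ZMod n, f x ≠ f (x + 1)}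

private instance rotAct (n l : ℕ) : AddAction (ZMod n) (CycZ n l) where
  vadd m f := ⟨fun v => f.1 (v + m), fun x => by
    have h := f.2 (x + m)
    have e : x + m + 1 = x + 1 + m := by ring
    rw [e] at h
    exact h⟩
  zero_vadd f := Subtype.ext (funext fun v => congrArg f.1 (add_zero v))
  add_vadd a b f := Subtype.ext (funext fun v =>
    congrArg f.1 (add_assoc v a b).symm)

private lemma rot_vadd_apply {n l : ℕ} (m : ZMod n) (f : CycZ n l) (v : ZMod n) :
    (m +ᵥ f).1 v = f.1 (v + m) := rfl

private lemma card_fixed (n l : ℕ) [NeZero n] (m : ZMod n) :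
    Nat.card (AddAction.fixedBy (CycZ n l) m)
      = Nat.card {g : ZMod (n.gcd m.val) → Fin l // ∀ y, g y ≠ g (y + 1)} := by
  set d := n.gcd m.val with hdval
  have hdpos : 0 < d := Nat.gcd_pos_of_pos_left _ (NeZero.pos n)
  haveI : NeZero d := ⟨hdpos.ne'⟩
  have hdvd : d ∣ n := Nat.gcd_dvd_left _ _
  have hdm : d ∣ m.val := Nat.gcd_dvd_right _ _
  set π : ZMod n →+* ZMod d := ZMod.castHom hdvd (ZMod d) with hπ
  have hπval : ∀ x : ZMod n, π x = ((x.val : ℕ) : ZMod d) := by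
    intro x
    rw [ZMod.castHom_apply, ← ZMod.natCast_val]
  have hπs : ∀ y : ZMod d, π ((y.val : ℕ) : ZMod n) = y := by
    intro y
    rw [map_natCast]
    exact ZMod.natCast_rightInverse y
  have hπm : π m = 0 := by
    rw [hπval, ZMod.natCast_eq_zero_iff]
    exact hdm
  -- invariance under nat multiples
  have claim1 : ∀ (f : ZMod n → Fin l) (c : ZMod n), (∀ v, f (v + c) = f v) →
      ∀ (j : ℕ) (v : ZMod n), f (v + j • c) = f v := by
    intro f c hc j
    induction j with
    | zero => intro v; simp
    | succ j ih =>
      intro v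
      have : v + (j + 1) • c = (v + j • c) + c := by
        rw [succ_nsmul, ← add_assoc]
      rw [this, hc, ih]
  -- invariance under d
  have hinv_d : ∀ (f : ZMod n → Fin l), (∀ v, f (v + m) = f v) →
      ∀ v, f (v + (d : ZMod n)) = f v := by
    intro f hf v
    have hbezout : (d : ℤ) = n * Nat.gcdA n m.val + m.val * Nat.gcdB n m.val :=
      Nat.gcd_eq_gcd_ab n m.val
    have : (d : ZMod n) = m * ((Nat.gcdB n m.val : ℤ) : ZMod n) := by
      have := congrArg (fun z : ℤ => (z : ZMod n)) hbezout
      push_cast at this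
      rw [ZMod.natCast_self, ZMod.natCast_val, ZMod.cast_id] at this
      simpa using this
    set B := ((Nat.gcdB n m.val : ℤ) : ZMod n) with hB
    have h2 : (d : ZMod n) = B.val • m := by
      rw [nsmul_eq_mul, ZMod.natCast_val, ZMod.cast_id, mul_comm]
      exact this
    rw [h2]
    exact claim1 f m hf B.val v
  -- congruence
  have hcongr : ∀ (f : ZMod n → Fin l), (∀ v, f (v + m) = f v) →
      ∀ x y : ZMod n, π x = π y → f x = f y := by
    intro f hf
    have key : ∀ x y : ZMod n, π x = π y → x.val ≤ y.val → f y = f x := by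
      intro x y hxy hle
      have hmod : x.val ≡ y.val [MOD d] := by
        rw [hπval, hπval] at hxy
        exact (ZMod.natCast_eq_natCast_iff _ _ _).mp hxy
      have hdvd2 : d ∣ y.val - x.val := (Nat.modEq_iff_dvd' hle).mp hmod
      obtain ⟨t, ht⟩ := hdvd2
      have hy : y.val = x.val + d * t := by omega
      have : y = x + t • (d : ZMod n) := by
        have hx : ((x.val : ℕ) : ZMod n) = x := ZMod.natCast_rightInverse x
        have hyy : ((y.val : ℕ) : ZMod n) = y := ZMod.natCast_rightInverse y
        rw [← hyy, hy]
        push_cast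
        rw [hx, nsmul_eq_mul]
        ring
      rw [this]
      exact claim1 f _ (hinv_d f hf) t x
    intro x y hxy
    rcases le_total x.val y.val with h | h
    · exact (key x y hxy h).symm
    · exact key y x hxy.symm h
  -- the bijection
  classical
  set Ψ : {g : ZMod d → Fin l // ∀ y, g y ≠ g (y + 1)} → AddAction.fixedBy (CycZ n l) m :=
    fun g => ⟨⟨fun x => g.1 (π x), fun x => by
        show g.1 (π x) ≠ g.1 (π (x + 1))
        have : π (x + 1) = π x + 1 := by rw [map_add, map_one]
        rw [this]
        exact g.2 (π x)⟩,
      by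
        show m +ᵥ _ = _
        apply Subtype.ext
        funext v
        rw [rot_vadd_apply]
        show g.1 (π (v + m)) = g.1 (π v)
        rw [map_add, hπm, add_zero]⟩ with hΨ
  have hbij : Function.Bijective Ψ := by
    constructor
    · intro g1 g2 heq
      apply Subtype.ext
      funext y
      have h2 : g1.1 (π ((y.val : ℕ) : ZMod n)) = g2.1 (π ((y.val : ℕ) : ZMod n)) :=
        congrFun (congrArg (fun F : AddAction.fixedBy (CycZ n l) m => F.1.1) heq)
          ((y.val : ℕ) : ZMod n)
      rwa [hπs] at h2
    · rintro ⟨⟨f, hf⟩, hfix⟩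
      have hinv : ∀ v, f (v + m) = f v := fun v =>
        congrFun (congrArg Subtype.val hfix) v
      have hcg := hcongr f hinv
      refine ⟨⟨fun y => f ((y.val : ℕ) : ZMod n), ?_⟩, ?_⟩
      · intro y
        show f ((y.val : ℕ) : ZMod n) ≠ f (((y + 1).val : ℕ) : ZMod n)
        have h1 : f (((y+1).val : ℕ) : ZMod n) = f (((y.val : ℕ) : ZMod n) + 1) := by
          apply hcg
          rw [hπs, map_add, hπs, map_one]
        rw [h1]
        exact hf _
      · apply Subtype.ext
        apply Subtype.ext
        funext x
        show f (((π x).val : ℕ) : ZMod n) = f x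
        apply hcg
        rw [hπs]
  exact (Nat.card_congr (Equiv.ofBijective Ψ hbij)).symm


private lemma card_gcd_filter (n d : ℕ) (hn : 0 < n) (hd : d ∣ n) :
    ((Finset.range n).filter (fun i => n.gcd i = d)).card = Nat.totient (n / d) := by
  have hdpos : 0 < d := Nat.pos_of_dvd_of_pos hd hn
  rw [Nat.totient_eq_card_coprime]
  apply Finset.card_nbij' (i := fun m => m / d) (j := fun k => d * k)
  · intro m hm
    simp only [Finset.mem_coe, Finset.mem_filter, Finset.mem_range] at hm ⊢
    obtain ⟨hmlt, hgcd⟩ := hm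
    have hdm : d ∣ m := hgcd ▸ Nat.gcd_dvd_right n m
    constructor
    · exact Nat.div_lt_div_of_lt_of_dvd hd hmlt
    · have := Nat.coprime_div_gcd_div_gcd (m := n) (n := m) (by rw [hgcd]; exact hdpos)
      rwa [hgcd] at this
  · intro k hk
    simp only [Finset.mem_coe, Finset.mem_filter, Finset.mem_range] at hk ⊢
    obtain ⟨hklt, hcop⟩ := hk
    constructor
    · calc d * k < d * (n / d) := (Nat.mul_lt_mul_left hdpos).mpr hklt
        _ = n := Nat.mul_div_cancel' hd
    · conv_lhs => rw [← Nat.mul_div_cancel' hd]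
      rw [Nat.gcd_mul_left]
      rw [Nat.Coprime] at hcop
      rw [hcop, Nat.mul_one]
  · intro m hm
    simp only [Finset.mem_coe, Finset.mem_filter, Finset.mem_range] at hm
    exact Nat.mul_div_cancel' (hm.2 ▸ Nat.gcd_dvd_right n m)
  · intro k hk
    exact Nat.mul_div_cancel_left k hdpos

private lemma sum_gcd (n : ℕ) (hn : 0 < n) (F : ℕ → ℤ) :
    ∑ i ∈ Finset.range n, F (n.gcd i)
      = ∑ d ∈ n.divisors, (Nat.totient (n / d) : ℤ) * F d := by
  classical
  rw [← Finset.sum_fiberwise_of_maps_to (g := fun i => n.gcd i) (t := n.divisors)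
    (fun i _ => Nat.mem_divisors.mpr ⟨Nat.gcd_dvd_left n i, hn.ne'⟩)]
  apply Finset.sum_congr rfl
  intro d hd
  rw [Finset.sum_congr rfl (fun i hi => by
    rw [(Finset.mem_filter.mp hi).2])]
  rw [Finset.sum_const, ← card_gcd_filter n d hn (Nat.mem_divisors.mp hd).1]
  simp [mul_comm]

private lemma parity_sum (n : ℕ) (he : Even n) : ∑ i ∈ Finset.range n, (-1:ℤ)^i = 0 := by
  obtain ⟨k, rfl⟩ := he
  induction k with
  | zero => simp
  | succ k ih =>
    have : k + 1 + (k + 1) = (k + k) + 1 + 1 := by ring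
    rw [this, Finset.sum_range_succ, Finset.sum_range_succ, ih]
    have hkk : Even (k + k) := ⟨k, rfl⟩
    rw [hkk.neg_one_pow]
    rw [pow_succ, hkk.neg_one_pow]
    ring

/-- For even `n > 0`, the number of orbits of the rotation group on proper
`l`-colorings of the cycle `Γ_n` equals `(1/n) ∑_{d ∣ n} φ(n/d) (l-1)^d`. -/
theorem orbital_stmt9 (n l : ℕ) (h0 : 0 < n) (heven : Even n) :
    (Nat.card (Quot (fun f g : {f : ZMod n → Fin l // ∀ x : ZMod n, f x ≠ f (x + 1)} =>
        ∃ m : ZMod n, ∀ v : ZMod n, g.1 v = f.1 (v + m))) : ℚ) =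
      (1 / (n : ℚ)) * ∑ d ∈ n.divisors, (Nat.totient (n / d) : ℚ) * ((l : ℚ) - 1) ^ d := by
  classical
  haveI : NeZero n := ⟨h0.ne'⟩
  set r : CycZ n l → CycZ n l → Prop :=
    fun f g => ∃ m : ZMod n, ∀ v : ZMod n, g.1 v = f.1 (v + m) with hr
  -- identify the quotient with the orbit quotient
  have hiff : ∀ a b : CycZ n l, r a b ↔ (AddAction.orbitRel (ZMod n) (CycZ n l)).r a b := by
    intro a b
    constructor
    · rintro ⟨m, hm⟩
      show a ∈ AddAction.orbit (ZMod n) b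
      rw [AddAction.mem_orbit_iff]
      refine ⟨-m, Subtype.ext (funext fun v => ?_)⟩
      show b.1 (v + -m) = a.1 v
      rw [hm (v + -m)]
      exact congrArg a.1 (by ring)
    · intro hab
      have : a ∈ AddAction.orbit (ZMod n) b := hab
      rw [AddAction.mem_orbit_iff] at this
      obtain ⟨m, hm⟩ := this
      refine ⟨-m, fun v => ?_⟩
      have := congrFun (congrArg Subtype.val hm) (v + -m)
      rw [← this]
      show b.1 v = b.1 (v + -m + m)
      exact congrArg b.1 (by ring)
  have hquoteq : Nat.card (Quot r)
      = Nat.card (Quotient (AddAction.orbitRel (ZMod n) (CycZ n l))) :=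
    Nat.card_congr (Quot.congr (Equiv.refl _) hiff)
  -- Burnside
  have hburn := AddAction.sum_card_fixedBy_eq_card_orbits_mul_card_addGroup
    (G := ZMod n) (X := CycZ n l)
  rw [ZMod.card] at hburn
  -- per-element fixed point count, in ℤ
  have hfix : ∀ m : ZMod n, (Fintype.card (AddAction.fixedBy (CycZ n l) m) : ℤ)
      = ((l:ℤ)-1)^(n.gcd m.val) + (-1)^(n.gcd m.val) * ((l:ℤ)-1) := by
    intro m
    rw [← Nat.card_eq_fintype_card, card_fixed n l m]
    exact card_cycZ l _ (Nat.gcd_pos_of_pos_left _ h0)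
  -- turn the sum over ZMod n into a sum over range n
  have hsum1 : (∑ m : ZMod n, (Fintype.card (AddAction.fixedBy (CycZ n l) m) : ℤ))
      = ∑ i ∈ Finset.range n, (((l:ℤ)-1)^(n.gcd i) + (-1)^(n.gcd i) * ((l:ℤ)-1)) := by
    rw [Finset.sum_congr rfl (fun m _ => hfix m)]
    refine Finset.sum_nbij' (fun m : ZMod n => m.val) (fun i : ℕ => (i : ZMod n))
      ?_ ?_ ?_ ?_ ?_
    · intro m _; exact Finset.mem_range.mpr (ZMod.val_lt m)
    · intro i _; exact Finset.mem_univ _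
    · intro m _; exact ZMod.natCast_rightInverse m
    · intro i hi; exact ZMod.val_cast_of_lt (Finset.mem_range.mp hi)
    · intro m _; rfl
  -- evaluate the sum
  have hsum2 : ∑ i ∈ Finset.range n, (((l:ℤ)-1)^(n.gcd i) + (-1)^(n.gcd i) * ((l:ℤ)-1))
      = ∑ d ∈ n.divisors, (Nat.totient (n / d) : ℤ) * ((l:ℤ)-1)^d := by
    rw [Finset.sum_add_distrib]
    have key : ∀ j : ℕ, Even (n.gcd j) ↔ Even j := by
      intro j
      constructor
      · rintro ⟨k, hk⟩
        obtain ⟨t, ht⟩ := (show (2:ℕ) ∣ n.gcd j from ⟨k, by omega⟩).trans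
          (Nat.gcd_dvd_right n j)
        exact ⟨t, by omega⟩
      · rintro ⟨k, hk⟩
        obtain ⟨c, hc⟩ := heven
        obtain ⟨t, ht⟩ := Nat.dvd_gcd (show (2:ℕ) ∣ n from ⟨c, by omega⟩)
          (show (2:ℕ) ∣ j from ⟨k, by omega⟩)
        exact ⟨t, by omega⟩
    have hpar : ∀ i : ℕ, ((-1:ℤ))^(n.gcd i) = (-1)^i := by
      intro i
      rcases Nat.even_or_odd i with he | ho
      · rw [he.neg_one_pow, ((key i).mpr he).neg_one_pow]
      · have hodd : Odd (n.gcd i) := Nat.not_even_iff_odd.mp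
          (fun hc => (Nat.not_even_iff_odd.mpr ho) ((key i).mp hc))
        rw [hodd.neg_one_pow, ho.neg_one_pow]
    have : ∑ i ∈ Finset.range n, (-1:ℤ)^(n.gcd i) * ((l:ℤ)-1)
        = (∑ i ∈ Finset.range n, (-1:ℤ)^i) * ((l:ℤ)-1) := by
      rw [Finset.sum_mul]
      exact Finset.sum_congr rfl (fun i _ => by rw [hpar i])
    rw [this, parity_sum n heven, zero_mul, add_zero]
    exact sum_gcd n h0 _
  -- combine in ℤ
  have hZ : (n:ℤ) * (Nat.card (Quot r) : ℤ)
      = ∑ d ∈ n.divisors, (Nat.totient (n / d) : ℤ) * ((l:ℤ)-1)^d := by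
    rw [hquoteq, Nat.card_eq_fintype_card]
    rw [← hsum2, ← hsum1]
    rw [mul_comm]
    exact_mod_cast (congrArg (Nat.cast : ℕ → ℤ) hburn).symm
  -- conclude in ℚ
  have hQ : (n:ℚ) * (Nat.card (Quot r) : ℚ)
      = ∑ d ∈ n.divisors, (Nat.totient (n / d) : ℚ) * ((l:ℚ)-1)^d := by
    exact_mod_cast congrArg (fun z : ℤ => (z : ℚ)) hZ
  have hn0 : (n:ℚ) ≠ 0 := by exact_mod_cast h0.ne'
  rw [hr] at hQ
  field_simp
  linarith [hQ]
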